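/- In the model Y = Zπ + Dτ + ε with unrestricted treatment effects τ ∈ ℝ^{N₁} (i.e., Γ = I), the OLS estimator of τ equals the imputation estimator: τ̂ = Y₁ − Z₁π̂₀, where π̂₀ is the OLS estimator of π computed from untreated observations only (regressing Y₀ on Z₀). Consequently, for any weights w₁, the efficient linear unbiased estimator of w₁'τ is w₁'(Y₁ − Z₁π̂₀). -/
import Mathlib


open Matrix

/-- Imputation form of the unrestricted OLS estimator.  In the model
`Y = Zπ + Dτ + ε` with unrestricted treatment effects (`Γ = I`), with rows
split into treated (`Fin N₁`) and untreated (`Fin N₀`) blocks,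
`D = (I; 0)`, the full design `G = (Z₁ I; Z₀ 0)` of full column rank:
the OLS estimator of `τ` (the `Sum.inr` block of the OLS coefficient vector)
equals the imputation estimator `Y₁ − Z₁ π̂₀`, where
`π̂₀ = (Z₀'Z₀)⁻¹ Z₀' Y₀` is OLS on the untreated observations only.
Consequently `w₁'τ̂ = w₁'(Y₁ − Z₁π̂₀)` for any weights `w₁`. -/
theorem ols_is_imputation (N₁ N₀ p : ℕ)
    (Z₁ : Matrix (Fin N₁) (Fin p) ℝ) (Z₀ : Matrix (Fin N₀) (Fin p) ℝ)
    (G : Matrix (Fin N₁ ⊕ Fin N₀) (Fin p ⊕ Fin N₁) ℝ)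
    (hG : G = Matrix.fromBlocks Z₁ (1 : Matrix (Fin N₁) (Fin N₁) ℝ) Z₀ 0)
    (hrank : IsUnit (Gᵀ * G).det)
    (hZ₀ : IsUnit (Z₀ᵀ * Z₀).det)
    (Y₁ : Fin N₁ → ℝ) (Y₀ : Fin N₀ → ℝ)
    (bhat : Fin p ⊕ Fin N₁ → ℝ)
    (hbhat : bhat = (Gᵀ * G)⁻¹ *ᵥ (Gᵀ *ᵥ Sum.elim Y₁ Y₀))
    (τhat : Fin N₁ → ℝ) (hτhat : τhat = fun j => bhat (Sum.inr j))
    (πhat₀ : Fin p → ℝ)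
    (hπhat₀ : πhat₀ = (Z₀ᵀ * Z₀)⁻¹ *ᵥ (Z₀ᵀ *ᵥ Y₀)) :
    τhat = Y₁ - Z₁ *ᵥ πhat₀ ∧
      ∀ w₁ : Fin N₁ → ℝ, w₁ ⬝ᵥ τhat = w₁ ⬝ᵥ (Y₁ - Z₁ *ᵥ πhat₀) := by
  have hnorm : (Z₀ᵀ * Z₀) *ᵥ πhat₀ = Z₀ᵀ *ᵥ Y₀ := by
    rw [hπhat₀, mulVec_mulVec, Matrix.mul_nonsing_inv _ hZ₀, one_mulVec]
  set b : Fin p ⊕ Fin N₁ → ℝ := Sum.elim πhat₀ (Y₁ - Z₁ *ᵥ πhat₀) with hb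
  have key : (Gᵀ * G) *ᵥ b = Gᵀ *ᵥ Sum.elim Y₁ Y₀ := by
    subst hG
    rw [fromBlocks_transpose, fromBlocks_multiply, hb,
      fromBlocks_mulVec, fromBlocks_mulVec]
    simp only [transpose_zero, transpose_one, Matrix.zero_mul, Matrix.one_mul,
      Matrix.mul_one, Matrix.mul_zero, add_zero, zero_add, zero_mulVec,
      one_mulVec, add_mulVec, mulVec_mulVec, Sum.elim_comp_inl, Sum.elim_comp_inr]
    simp only [mulVec_sub, mulVec_mulVec, hnorm]
    funext i
    cases i <;> simp only [Sum.elim_inl, Sum.elim_inr, Pi.add_apply, Pi.sub_apply] <;> ring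
  have hbb : bhat = b := by
    rw [hbhat, ← key, mulVec_mulVec, Matrix.nonsing_inv_mul _ hrank, one_mulVec]
  have h1 : τhat = Y₁ - Z₁ *ᵥ πhat₀ := by
    funext j; rw [hτhat]; simp [hbb, hb]
  exact ⟨h1, fun w₁ => by rw [h1]⟩
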